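/- arXiv:2401.05169 — 3 statements merged into one kernel-verified Lean document; each statement's English description precedes it below -/
import Mathlib

section
/- For every integer M, the set Ψ_M of M-approximable elements of O_∞ has full Haar measure in O_∞: for every Haar measure μ on K_∞ = F_q((1/t)), the complement O_∞ ∖ Ψ_M is μ-null. (This is the case A = F_q[t], genus 0, deg P_∞ = 1 of Theorem 1.1 of the paper.) -/
/-!
Statement 0: For every integer `M`, the set `Ψ_M` of `M`-approximable elements of `O_∞`
has full Haar measure in `O_∞` (case `A = F_q[t]` of Theorem 1.1).
-/

open FunctionField Filter Polynomial MeasureTheory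
open scoped Multiplicative WithZero ENNReal

set_option linter.unusedSectionVars false
set_option linter.unusedTactic false
set_option linter.unreachableTactic false
set_option maxHeartbeats 1000000

variable (Fq : Type) [Field Fq] [Fintype Fq] [DecidableEq (RatFunc Fq)]

/-- The real absolute value attached to a `ℤᵐ⁰`-valued valuation with base `q`:
`Multiplicative.ofAdd n ↦ q ^ n` and `0 ↦ 0`. -/
noncomputable def zabs (q : ℕ) (x : ℤᵐ⁰) : ℝ :=
  if hx : x = 0 then 0 else (q : ℝ) ^ Multiplicative.toAdd (WithZero.unzero hx)

/-- The absolute value `|h| = q ^ (-ν_∞ h)` on `K_∞ = F_q((1/t))`. -/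
noncomputable def absInfty (q : ℕ) (h : RatFunc.CompletionAtInfty Fq) : ℝ :=
  zabs q (Valued.v h)

/-- The embedding of the polynomial ring `F_q[t]` into `K_∞ = F_q((1/t))`. -/
noncomputable def polyToInfty (p : Polynomial Fq) : RatFunc.CompletionAtInfty Fq :=
  letI := RatFunc.inftyValued Fq
  UniformSpace.Completion.coe' (algebraMap (Polynomial Fq) (RatFunc Fq) p)

/-- `f/g` is an `M`-approximation of `α`: `f` and `g` are coprime, `g ≠ 0`, and
`|α - f/g| < q^(-M) / |g|²`. -/
def IsApprox (q : ℕ) (M : ℤ) (α : RatFunc.CompletionAtInfty Fq) (f g : Polynomial Fq) : Prop :=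
  g ≠ 0 ∧ IsCoprime f g ∧
    absInfty Fq q (α - polyToInfty Fq f / polyToInfty Fq g) <
      (q : ℝ) ^ (-M) / absInfty Fq q (polyToInfty Fq g) ^ 2

/-- `α` is `M`-approximable: it is the limit of a sequence of `M`-approximations of `α`. -/
def IsApproximable (q : ℕ) (M : ℤ) (α : RatFunc.CompletionAtInfty Fq) : Prop :=
  ∃ f g : ℕ → Polynomial Fq, (∀ n, IsApprox Fq q M α (f n) (g n)) ∧
    Tendsto (fun n => polyToInfty Fq (f n) / polyToInfty Fq (g n)) atTop (nhds α)

/-- The valuation ring `O_∞ = {α ∈ K_∞ : |α| ≤ 1}`. -/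
def Oinfty (q : ℕ) : Set (RatFunc.CompletionAtInfty Fq) := {α | absInfty Fq q α ≤ 1}

noncomputable instance : MeasurableSpace (RatFunc.CompletionAtInfty Fq) := borel _

instance : BorelSpace (RatFunc.CompletionAtInfty Fq) := ⟨rfl⟩

/-- A Haar measure on `K_∞`: a Borel measure invariant under all additive translations,
positive and finite on `O_∞`. -/
def IsHaar (q : ℕ) (μ : Measure (RatFunc.CompletionAtInfty Fq)) : Prop :=
  (∀ x : RatFunc.CompletionAtInfty Fq, μ.map (fun y => y + x) = μ) ∧
    0 < μ (Oinfty Fq q) ∧ μ (Oinfty Fq q) < ⊤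

namespace FMA
variable {Fq}

noncomputable def coeK (r : RatFunc Fq) : RatFunc.CompletionAtInfty Fq :=
  letI := RatFunc.inftyValued Fq
  UniformSpace.Completion.coe' r

lemma vcoe (r : RatFunc Fq) : Valued.v (coeK r) = RatFunc.inftyValuationDef Fq r := by
  have := @Valued.valuedCompletion_apply (RatFunc Fq) _ _ _ (RatFunc.inftyValued Fq) r
  exact this.trans (RatFunc.inftyValued.def Fq)

lemma polyToInfty_eq (p : Polynomial Fq) :
    polyToInfty Fq p = coeK (algebraMap (Polynomial Fq) (RatFunc Fq) p) := rfl

noncomputable def phi : Polynomial Fq →+* RatFunc.CompletionAtInfty Fq :=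
  letI := RatFunc.inftyValued Fq
  (UniformSpace.Completion.coeRingHom).comp (algebraMap (Polynomial Fq) (RatFunc Fq))

lemma phi_eq (p : Polynomial Fq) : phi p = polyToInfty Fq p := rfl

/-- `gam n = ofAdd n` as an element of `ℤᵐ⁰`. -/
def gam (n : ℤ) : ℤᵐ⁰ := ((Multiplicative.ofAdd n : Multiplicative ℤ) : ℤᵐ⁰)

lemma gam_ne_zero (n : ℤ) : gam n ≠ 0 := WithZero.coe_ne_zero

lemma gam_le_gam {a b : ℤ} : gam a ≤ gam b ↔ a ≤ b := by
  rw [gam, gam, WithZero.coe_le_coe, Multiplicative.ofAdd_le]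

lemma gam_lt_gam {a b : ℤ} : gam a < gam b ↔ a < b := by
  rw [gam, gam, WithZero.coe_lt_coe, Multiplicative.ofAdd_lt]

lemma gam_mul (a b : ℤ) : gam a * gam b = gam (a + b) := by
  rw [gam, gam, gam, ← WithZero.coe_mul, ← ofAdd_add]

lemma gam_inv (a : ℤ) : (gam a)⁻¹ = gam (-a) := by
  rw [gam, gam, ← WithZero.coe_inv, ← ofAdd_neg]

lemma gam_zero_eq_one : gam 0 = 1 := rfl

lemma v_polyToInfty {p : Polynomial Fq} (hp : p ≠ 0) :
    Valued.v (polyToInfty Fq p) = gam (p.natDegree : ℤ) := by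
  rw [polyToInfty_eq, vcoe, inftyValuation.polynomial Fq hp]; rfl

lemma v_phi {p : Polynomial Fq} (hp : p ≠ 0) : Valued.v (phi p) = gam (p.natDegree : ℤ) :=
  v_polyToInfty hp

lemma phi_ne_zero {p : Polynomial Fq} (hp : p ≠ 0) : (phi p : RatFunc.CompletionAtInfty Fq) ≠ 0 := by
  intro h
  have := v_phi hp
  rw [h, map_zero] at this
  exact gam_ne_zero _ this.symm

/-- transfer lemmas -/
lemma zabs_gam (q : ℕ) (n : ℤ) : zabs q (gam n) = (q : ℝ) ^ n := by
  rw [zabs, dif_neg (gam_ne_zero n),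
    show WithZero.unzero (gam_ne_zero n) = Multiplicative.ofAdd n from WithZero.unzero_coe _,
    toAdd_ofAdd]

lemma zabs_zero (q : ℕ) : zabs q 0 = 0 := dif_pos rfl

variable {q : ℕ}

lemma zabs_le_iff (hq1 : 1 < q) {x : ℤᵐ⁰} {n : ℤ} :
    zabs q x ≤ (q : ℝ) ^ n ↔ x ≤ gam n := by
  have hq0 : (0:ℝ) < (q:ℝ) := by positivity
  rcases eq_or_ne x 0 with rfl | hx
  · rw [zabs_zero]
    constructor
    · intro _; exact zero_le'
    · intro _; positivity
  · obtain ⟨u, rfl⟩ := WithZero.ne_zero_iff_exists.mp hx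
    have : (u : ℤᵐ⁰) = gam (Multiplicative.toAdd u) := by simp [gam]
    rw [this, zabs_gam, gam_le_gam]
    rw [zpow_le_zpow_iff_right₀ (by exact_mod_cast hq1)]

lemma zabs_lt_iff (hq1 : 1 < q) {x : ℤᵐ⁰} {n : ℤ} :
    zabs q x < (q : ℝ) ^ n ↔ x < gam n := by
  have hq0 : (0:ℝ) < (q:ℝ) := by positivity
  rcases eq_or_ne x 0 with rfl | hx
  · simp only [zabs_zero]
    constructor
    · intro _; exact WithZero.zero_lt_coe _
    · intro _; positivity
  · obtain ⟨u, rfl⟩ := WithZero.ne_zero_iff_exists.mp hx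
    have : (u : ℤᵐ⁰) = gam (Multiplicative.toAdd u) := by simp [gam]
    rw [this, zabs_gam, gam_lt_gam]
    rw [zpow_lt_zpow_iff_right₀ (by exact_mod_cast hq1)]

lemma lt_gam_succ {x : ℤᵐ⁰} {n : ℤ} : x < gam (n + 1) ↔ x ≤ gam n := by
  rcases eq_or_ne x 0 with rfl | hx
  · simp [WithZero.zero_lt_coe, gam, zero_le']
  · obtain ⟨u, rfl⟩ := WithZero.ne_zero_iff_exists.mp hx
    have : (u : ℤᵐ⁰) = gam (Multiplicative.toAdd u) := by simp [gam]
    rw [this, gam_lt_gam, gam_le_gam]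
    omega


/-! ### rationals in the completion -/

noncomputable def ratH (f g : Polynomial Fq) : RatFunc.CompletionAtInfty Fq := phi f / phi g

lemma v_ratH {f g : Polynomial Fq} (hf : f ≠ 0) (hg : g ≠ 0) :
    Valued.v (ratH f g) = gam ((f.natDegree : ℤ) - g.natDegree) := by
  rw [ratH, map_div₀, v_phi hf, v_phi hg, div_eq_mul_inv, gam_inv, gam_mul, sub_eq_add_neg]

lemma v_ratH_le {f g : Polynomial Fq} :
    Valued.v (ratH f g) ≤ gam ((f.natDegree : ℤ) - g.natDegree) := by
  rcases eq_or_ne f 0 with rfl | hf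
  · simp [ratH]
  rcases eq_or_ne g 0 with rfl | hg
  · simp [ratH]
  exact le_of_eq (v_ratH hf hg)

lemma ratH_cancel {d f g : Polynomial Fq} (hd : d ≠ 0) :
    ratH (d * f) (d * g) = ratH f g := by
  rw [ratH, ratH, map_mul, map_mul, mul_div_mul_left _ _ (phi_ne_zero hd)]

lemma ratH_sub {f g w h : Polynomial Fq} (hg : g ≠ 0) (hh : h ≠ 0) :
    ratH f g - ratH w h = ratH (f * h - w * g) (g * h) := by
  rw [ratH, ratH, ratH, map_sub, map_mul, map_mul, map_mul]
  field_simp [phi_ne_zero hg, phi_ne_zero hh]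

/-- spacing of distinct rationals -/
lemma spacing {f g w h : Polynomial Fq} (hg : g ≠ 0) (hh : h ≠ 0)
    (hne : ratH f g ≠ ratH w h) :
    gam (-(g.natDegree : ℤ) - h.natDegree) ≤ Valued.v (ratH f g - ratH w h) := by
  have hnum : f * h - w * g ≠ 0 := by
    intro h0
    apply hne
    rw [ratH, ratH, div_eq_div_iff (phi_ne_zero hg) (phi_ne_zero hh), ← map_mul, ← map_mul]
    have : f * h = w * g := by linear_combination h0
    rw [this]
  rw [ratH_sub hg hh, v_ratH hnum (mul_ne_zero hg hh), gam_le_gam,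
    Polynomial.natDegree_mul hg hh]
  push_cast
  have : (0:ℤ) ≤ ((f * h - w * g).natDegree : ℤ) := Int.natCast_nonneg _
  omega

/-! ### density, floor, digits -/

lemma nhds_gam (x : RatFunc.CompletionAtInfty Fq) (n : ℤ) :
    {y : RatFunc.CompletionAtInfty Fq | Valued.v (y - x) < gam n} ∈ nhds x := by
  rw [Valued.mem_nhds]
  set k : ℕ := (-n).toNat with hk
  have hX : (Polynomial.X : Polynomial Fq) ^ k ≠ 0 := pow_ne_zero _ Polynomial.X_ne_zero
  set z : RatFunc.CompletionAtInfty Fq := (phi ((Polynomial.X : Polynomial Fq) ^ k))⁻¹ with hzdef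
  have hz : Valued.v z = gam (-(k:ℤ)) := by
    rw [hzdef, map_inv₀, v_phi hX, Polynomial.natDegree_pow, Polynomial.natDegree_X, mul_one,
      gam_inv]
  have hz0 : Valued.v.restrict z ≠ 0 :=
    ((Valuation.restrict_pos_iff _ z).mpr (by rw [hz]; exact zero_lt_iff.mpr (gam_ne_zero _))).ne'
  refine ⟨Units.mk0 _ hz0, fun y hy => ?_⟩
  simp only [Set.mem_setOf_eq, Units.val_mk0, Valuation.restrict_lt_iff] at hy ⊢
  rw [hz] at hy
  have : ((-n).toNat : ℤ) ≥ -n := Int.self_le_toNat _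
  exact lt_of_lt_of_le hy (gam_le_gam.mpr (by omega))

lemma exists_rat_close (x : RatFunc.CompletionAtInfty Fq) (n : ℤ) :
    ∃ r : RatFunc Fq, Valued.v (x - coeK r) < gam n := by
  letI := RatFunc.inftyValued Fq
  have hd : DenseRange (UniformSpace.Completion.coe' (α := RatFunc Fq)) :=
    UniformSpace.Completion.denseRange_coe
  have hnb : {y : RatFunc.CompletionAtInfty Fq | Valued.v (y - x) < gam n} ∈ nhds x := by
    exact nhds_gam x n
  obtain ⟨y, hy1, r, hr⟩ := mem_closure_iff_nhds.mp (hd x) _ hnb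
  refine ⟨r, ?_⟩
  rw [Valuation.map_sub_swap]
  rw [← hr] at hy1
  exact hy1

lemma triangle {x y z : RatFunc.CompletionAtInfty Fq} {g : ℤᵐ⁰} (h1 : Valued.v (x - y) ≤ g)
    (h2 : Valued.v (y - z) ≤ g) : Valued.v (x - z) ≤ g := by
  have : x - z = (x - y) + (y - z) := by ring
  rw [this]
  exact le_trans (Valuation.map_add _ _ _) (max_le h1 h2)

noncomputable def coeKH : RatFunc Fq →+* RatFunc.CompletionAtInfty Fq :=
  letI := RatFunc.inftyValued Fq
  UniformSpace.Completion.coeRingHom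

lemma coeKH_eq (r : RatFunc Fq) : coeKH r = coeK r := rfl

lemma coeK_eq_ratH (r : RatFunc Fq) : coeK r = ratH r.num r.denom := by
  have h := RatFunc.num_div_denom r
  rw [ratH]
  have : coeK (algebraMap (Polynomial Fq) (RatFunc Fq) r.num /
      algebraMap (Polynomial Fq) (RatFunc Fq) r.denom) = phi r.num / phi r.denom := by
    rw [← coeKH_eq]
    exact map_div₀ (coeKH (Fq := Fq)) _ _
  rw [← this, h]

lemma exists_floor (x : RatFunc.CompletionAtInfty Fq) :
    ∃ P : Polynomial Fq, Valued.v (x - phi P) ≤ gam (-1) := by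
  obtain ⟨r, hr⟩ := exists_rat_close x 0
  have hr' : Valued.v (x - coeK r) ≤ gam (-1) := by
    apply lt_gam_succ.mp
    rwa [show gam (-1 + 1) = gam 0 by norm_num]
  set d := r.denom with hd
  have hdm : d.Monic := r.monic_denom
  have hdne : d ≠ 0 := r.denom_ne_zero
  refine ⟨r.num /ₘ d, triangle hr' ?_⟩
  have hsplit : r.num %ₘ d + d * (r.num /ₘ d) = r.num := Polynomial.modByMonic_add_div _ _
  have : coeK r - phi (r.num /ₘ d) = ratH (r.num %ₘ d) d := by
    rw [coeK_eq_ratH, ratH, ratH, ← hd]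
    rw [div_sub' (phi_ne_zero hdne)]
    congr 1
    rw [← map_mul, ← map_sub]
    congr 1
    linear_combination -hsplit
  rw [this]
  rcases eq_or_ne (r.num %ₘ d) 0 with h0 | h0
  · rw [h0, ratH, map_zero, zero_div, map_zero]
    exact zero_le'
  · refine le_trans v_ratH_le ?_
    rw [gam_le_gam]
    have hlt : (r.num %ₘ d).natDegree < d.natDegree := by
      have := Polynomial.degree_modByMonic_lt r.num hdm
      exact Polynomial.natDegree_lt_natDegree h0 this
    omega

lemma exists_res {z : RatFunc.CompletionAtInfty Fq} (hz : Valued.v z ≤ gam 0) :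
    ∃ c : Fq, Valued.v (z - phi (Polynomial.C c)) ≤ gam (-1) := by
  obtain ⟨P, hP⟩ := exists_floor z
  rcases eq_or_ne P 0 with rfl | hPne
  · exact ⟨0, by simpa using hP⟩
  · have hvP : Valued.v (phi P) ≤ gam 0 := by
      have : phi P = z - (z - phi P) := by ring
      rw [this]
      exact Valuation.map_sub_le _ hz (le_trans hP (by rw [gam_le_gam]; omega))
    rw [v_phi hPne, gam_le_gam] at hvP
    have hdeg : P.natDegree = 0 := by omega
    obtain ⟨c, hc⟩ := Polynomial.natDegree_eq_zero.mp hdeg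
    exact ⟨c, by rwa [hc]⟩


/-! ### digit expansions -/

noncomputable def tau : RatFunc.CompletionAtInfty Fq := (phi (Polynomial.X : Polynomial Fq))⁻¹

lemma v_tau_pow (n : ℕ) : Valued.v ((tau : RatFunc.CompletionAtInfty Fq) ^ n) = gam (-(n : ℤ)) := by
  have hX : (Polynomial.X : Polynomial Fq) ^ n ≠ 0 := pow_ne_zero _ Polynomial.X_ne_zero
  rw [tau, inv_pow, map_inv₀, ← map_pow, v_phi hX, Polynomial.natDegree_pow,
    Polynomial.natDegree_X, mul_one, gam_inv]

lemma exists_digit {y : RatFunc.CompletionAtInfty Fq} (n : ℕ) (hy : Valued.v y ≤ gam (-(n:ℤ))) :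
    ∃ c : Fq, Valued.v (y - phi (Polynomial.C c) * tau ^ n) ≤ gam (-(n:ℤ) - 1) := by
  set T : RatFunc.CompletionAtInfty Fq := phi (Polynomial.X : Polynomial Fq) with hT
  have hTn : T ^ n ≠ 0 := by
    rw [hT, ← map_pow]
    exact phi_ne_zero (pow_ne_zero _ Polynomial.X_ne_zero)
  have hvT : Valued.v (T ^ n) = gam (n : ℤ) := by
    rw [hT, ← map_pow, v_phi (pow_ne_zero _ Polynomial.X_ne_zero),
      Polynomial.natDegree_pow, Polynomial.natDegree_X, mul_one]
  have hz : Valued.v (y * T ^ n) ≤ gam 0 := by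
    rw [map_mul, hvT]
    calc Valued.v y * gam (n:ℤ) ≤ gam (-(n:ℤ)) * gam (n:ℤ) :=
          mul_le_mul_left hy _
    _ = gam 0 := by rw [gam_mul]; norm_num
  obtain ⟨c, hc⟩ := exists_res hz
  refine ⟨c, ?_⟩
  have htau : (tau : RatFunc.CompletionAtInfty Fq) ^ n = (T ^ n)⁻¹ := by rw [tau, inv_pow]
  have hy' : y - phi (Polynomial.C c) * tau ^ n
      = (y * T ^ n - phi (Polynomial.C c)) * tau ^ n := by
    rw [htau, sub_mul, mul_assoc, mul_inv_cancel₀ hTn, mul_one]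
  rw [hy', map_mul, v_tau_pow]
  calc Valued.v (y * T ^ n - phi (Polynomial.C c)) * gam (-(n:ℤ))
      ≤ gam (-1) * gam (-(n:ℤ)) := mul_le_mul_left hc _
    _ = gam (-(n:ℤ) - 1) := by rw [gam_mul]; ring_nf

/-- sum of digits `c i` at positions `n + i`, `i < j`. -/
noncomputable def dSum (n j : ℕ) (c : Fin j → Fq) : RatFunc.CompletionAtInfty Fq :=
  ∑ i : Fin j, phi (Polynomial.C (c i)) * tau ^ (n + (i : ℕ))

lemma v_phiC_le (a : Fq) : Valued.v (phi (Polynomial.C a) : RatFunc.CompletionAtInfty Fq) ≤ gam 0 := by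
  rcases eq_or_ne a 0 with rfl | ha
  · simp only [map_zero]
    exact zero_le'
  · rw [v_phi (Polynomial.C_ne_zero.mpr ha), Polynomial.natDegree_C]
    exact le_of_eq (by norm_num)

lemma v_dSum_le (n j : ℕ) (c : Fin j → Fq) :
    Valued.v (dSum n j c : RatFunc.CompletionAtInfty Fq) ≤ gam (-(n:ℤ)) := by
  apply Valuation.map_sum_le
  intro i _
  rw [map_mul]
  calc Valued.v (phi (Polynomial.C (c i)) : RatFunc.CompletionAtInfty Fq) * Valued.v (tau ^ (n + (i:ℕ)) : RatFunc.CompletionAtInfty Fq)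
      ≤ gam 0 * gam (-(n + (i:ℕ) : ℤ)) := by
        rw [v_tau_pow]
        exact mul_le_mul_left (v_phiC_le _) _
    _ ≤ gam (-(n:ℤ)) := by rw [gam_mul, gam_le_gam]; push_cast; omega

lemma hexpaux (n j : ℕ) (i : Fin j) : n + ((Fin.succ i : Fin (j+1)) : ℕ) = (n+1) + (i:ℕ) := by
  rw [Fin.val_succ]; omega

lemma dSum_cover : ∀ (j n : ℕ) (y : RatFunc.CompletionAtInfty Fq), Valued.v y ≤ gam (-(n:ℤ)) →
    ∃ c : Fin j → Fq, Valued.v (y - dSum n j c) ≤ gam (-(n:ℤ) - j) := by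
  intro j
  induction j with
  | zero =>
    intro n y hy
    exact ⟨fun i => 0, by simpa [dSum] using hy⟩
  | succ j ih =>
    intro n y hy
    obtain ⟨c0, hc0⟩ := exists_digit n hy
    obtain ⟨c', hc'⟩ := ih (n+1) (y - phi (Polynomial.C c0) * tau ^ n)
      (by rwa [show (-((n:ℕ)+1 : ℕ) : ℤ) = -(n:ℤ) - 1 by push_cast; ring])
    refine ⟨Fin.cons c0 c', ?_⟩
    have hsum : dSum n (j+1) (Fin.cons c0 c') =
        phi (Polynomial.C c0) * tau ^ n + dSum (n+1) j c' := by
      rw [dSum, Fin.sum_univ_succ, dSum]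
      congr 1
      · apply Finset.sum_congr rfl
        intro i _
        congr 2
        rw [Fin.val_succ]
        omega
      all_goals simp
    rw [hsum, show y - (phi (Polynomial.C c0) * tau ^ n + dSum (n+1) j c')
      = (y - phi (Polynomial.C c0) * tau ^ n) - dSum (n+1) j c' by ring]
    refine le_trans hc' ?_
    rw [gam_le_gam]
    push_cast
    omega

lemma dSum_sub (n j : ℕ) (c c' : Fin j → Fq) :
    dSum n j c - dSum n j c' = dSum n j (c - c') := by
  rw [dSum, dSum, dSum, ← Finset.sum_sub_distrib]
  apply Finset.sum_congr rfl
  intro i _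
  rw [← sub_mul, ← map_sub, ← Polynomial.C_sub]
  rfl

lemma v_dSum_ne_zero : ∀ (j n : ℕ) (c : Fin j → Fq), c ≠ 0 →
    gam (-(n:ℤ) - j) < Valued.v (dSum n j c : RatFunc.CompletionAtInfty Fq) := by
  intro j
  induction j with
  | zero =>
    intro n c hc
    exact absurd (_root_.funext fun i => i.elim0) hc
  | succ j ih =>
    intro n c hc
    have hsum : dSum n (j+1) c =
        phi (Polynomial.C (c 0)) * tau ^ n + dSum (n+1) j (Fin.tail c) := by
      rw [dSum, Fin.sum_univ_succ, dSum]
      congr 1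
      · apply Finset.sum_congr rfl
        intro i _
        rw [show Fin.tail c i = c i.succ from rfl]
        congr 2
        rw [Fin.val_succ]
        omega
      all_goals simp
    rcases eq_or_ne (c 0) 0 with h0 | h0
    · have htail : Fin.tail c ≠ 0 := by
        intro h
        apply hc
        apply _root_.funext
        intro i
        rcases Fin.eq_zero_or_eq_succ i with rfl | ⟨i', rfl⟩
        · exact h0
        · exact congrFun h i'
      have heq : (-(n:ℤ) - ((j+1 : ℕ) : ℤ)) = (-(((n+1):ℕ):ℤ) - (j:ℤ)) := by push_cast; ring
      rw [hsum, h0, Polynomial.C_0, map_zero, zero_mul, zero_add, heq]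
      exact ih (n+1) (Fin.tail c) htail
    · have hfirst : Valued.v (phi (Polynomial.C (c 0)) * tau ^ n : RatFunc.CompletionAtInfty Fq) = gam (-(n:ℤ)) := by
        rw [map_mul, v_phi (Polynomial.C_ne_zero.mpr h0), Polynomial.natDegree_C, v_tau_pow,
          gam_mul]
        norm_num
      have hrest : Valued.v (dSum (n+1) j (Fin.tail c) : RatFunc.CompletionAtInfty Fq) ≤ gam (-(n:ℤ) - 1) := by
        refine le_trans (v_dSum_le _ _ _) (le_of_eq ?_)
        congr 1
        push_cast
        ring
      rw [hsum]
      have hv : Valued.v (phi (Polynomial.C (c 0)) * tau ^ n + dSum (n+1) j (Fin.tail c) :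
          RatFunc.CompletionAtInfty Fq) = gam (-(n:ℤ)) := by
        rw [Valuation.map_add_eq_of_lt_left]
        · exact hfirst
        · rw [hfirst]
          exact lt_of_le_of_lt hrest (by rw [gam_lt_gam]; omega)
      rw [hv, gam_lt_gam]
      push_cast
      omega


/-! ### Dirichlet pigeonhole -/

noncomputable def pc (m : ℕ) (c : Fin (m+1) → Fq) : Polynomial Fq :=
  ∑ i : Fin (m+1), Polynomial.monomial (i : ℕ) (c i)

lemma pc_coeff (m : ℕ) (c : Fin (m+1) → Fq) (i : Fin (m+1)) : (pc m c).coeff i = c i := by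
  rw [pc, Polynomial.finset_sum_coeff]
  rw [Finset.sum_eq_single i]
  · rw [Polynomial.coeff_monomial, if_pos rfl]
  · intro b _ hb
    rw [Polynomial.coeff_monomial, if_neg (fun h => hb (Fin.ext h))]
  · intro h
    exact absurd (Finset.mem_univ i) h

lemma pc_inj (m : ℕ) : Function.Injective (pc (Fq := Fq) m) := by
  intro c c' h
  apply _root_.funext
  intro i
  rw [← pc_coeff m c i, ← pc_coeff m c' i, h]

lemma pc_natDegree_le (m : ℕ) (c : Fin (m+1) → Fq) : (pc m c).natDegree ≤ m := by
  apply Polynomial.natDegree_sum_le_of_forall_le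
  intro i _
  exact le_trans (Polynomial.natDegree_monomial_le _) (by omega)

lemma dirichlet {q : ℕ} (hq : Fintype.card Fq = q) (α : RatFunc.CompletionAtInfty Fq) (m : ℕ) :
    ∃ f g : Polynomial Fq, g ≠ 0 ∧ IsCoprime f g ∧ g.natDegree ≤ m ∧
      Valued.v (α - ratH f g) ≤ gam (-(m:ℤ) - 1 - g.natDegree) := by
  classical
  have hq1 : 1 < q := hq ▸ Fintype.one_lt_card
  have hfl : ∀ c : Fin (m+1) → Fq, ∃ P : Polynomial Fq, ∃ w : Fin m → Fq,
      Valued.v (phi (pc m c) * α - phi P - dSum 1 m w) ≤ gam (-(1:ℤ) - m) := by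
    intro c
    obtain ⟨P, hP⟩ := exists_floor (phi (pc m c) * α)
    obtain ⟨w, hw⟩ := dSum_cover m 1 (phi (pc m c) * α - phi P)
      (by rwa [show (-((1:ℕ):ℤ)) = (-1 : ℤ) by norm_num])
    refine ⟨P, w, ?_⟩
    rw [show (-(1:ℤ) - m) = (-((1:ℕ):ℤ) - m) by norm_num]
    exact hw
  choose P W hPW using hfl
  have hcard : Fintype.card (Fin m → Fq) < Fintype.card (Fin (m+1) → Fq) := by
    rw [Fintype.card_fun, Fintype.card_fun, hq, Fintype.card_fin, Fintype.card_fin]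
    exact Nat.pow_lt_pow_right hq1 (by omega)
  obtain ⟨c₁, c₂, hne, hW⟩ := Fintype.exists_ne_map_eq_of_card_lt W hcard
  set g0 : Polynomial Fq := pc m c₁ - pc m c₂ with hg0
  set f0 : Polynomial Fq := P c₁ - P c₂ with hf0
  have hg0ne : g0 ≠ 0 := sub_ne_zero.mpr (fun h => hne (pc_inj m h))
  have hg0deg : g0.natDegree ≤ m := le_trans (Polynomial.natDegree_sub_le _ _)
    (max_le (pc_natDegree_le m c₁) (pc_natDegree_le m c₂))
  have hkey : Valued.v (phi g0 * α - phi f0) ≤ gam (-(1:ℤ) - m) := by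
    have hexpand : phi g0 * α - phi f0 =
        (phi (pc m c₁) * α - phi (P c₁) - dSum 1 m (W c₁))
        - (phi (pc m c₂) * α - phi (P c₂) - dSum 1 m (W c₂)) := by
      rw [hg0, hf0, map_sub, map_sub, hW]
      ring
    rw [hexpand]
    exact Valuation.map_sub_le _ (hPW c₁) (hPW c₂)
  have hval0 : Valued.v (α - ratH f0 g0) ≤ gam (-(m:ℤ) - 1 - g0.natDegree) := by
    have hα : α - ratH f0 g0 = (phi g0 * α - phi f0) / phi g0 := by
      rw [ratH, eq_div_iff (phi_ne_zero hg0ne), sub_mul,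
        div_mul_cancel₀ _ (phi_ne_zero hg0ne)]
      ring
    rw [hα, map_div₀, v_phi hg0ne, div_eq_mul_inv, gam_inv]
    calc Valued.v (phi g0 * α - phi f0) * gam (-(g0.natDegree : ℤ))
        ≤ gam (-(1:ℤ) - m) * gam (-(g0.natDegree:ℤ)) := mul_le_mul_left hkey _
      _ = gam (-(m:ℤ) - 1 - g0.natDegree) := by rw [gam_mul]; ring_nf
  -- reduce to lowest terms
  set dd : Polynomial Fq := EuclideanDomain.gcd f0 g0 with hdd
  have hddne : dd ≠ 0 := by
    rw [hdd, Ne, EuclideanDomain.gcd_eq_zero_iff]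
    exact fun h => hg0ne h.2
  set f1 : Polynomial Fq := f0 / dd with hf1
  set g1 : Polynomial Fq := g0 / dd with hg1
  have hf0eq : dd * f1 = f0 := EuclideanDomain.mul_div_cancel' hddne
    (EuclideanDomain.gcd_dvd_left f0 g0)
  have hg0eq : dd * g1 = g0 := EuclideanDomain.mul_div_cancel' hddne
    (EuclideanDomain.gcd_dvd_right f0 g0)
  have hg1ne : g1 ≠ 0 := by
    rintro h
    rw [h, mul_zero] at hg0eq
    exact hg0ne hg0eq.symm
  have hg1deg : g1.natDegree ≤ g0.natDegree :=
    Polynomial.natDegree_le_of_dvd ⟨dd, by rw [← hg0eq]; ring⟩ hg0ne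
  have hcop : IsCoprime f1 g1 := by
    have hbez : dd = f0 * EuclideanDomain.gcdA f0 g0 + g0 * EuclideanDomain.gcdB f0 g0 :=
      EuclideanDomain.gcd_eq_gcd_ab f0 g0
    refine ⟨EuclideanDomain.gcdA f0 g0, EuclideanDomain.gcdB f0 g0, ?_⟩
    have : dd * (EuclideanDomain.gcdA f0 g0 * f1 + EuclideanDomain.gcdB f0 g0 * g1) = dd * 1 := by
      rw [mul_one]
      calc dd * (EuclideanDomain.gcdA f0 g0 * f1 + EuclideanDomain.gcdB f0 g0 * g1)
          = (dd * f1) * EuclideanDomain.gcdA f0 g0 + (dd * g1) * EuclideanDomain.gcdB f0 g0 := by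
            ring
        _ = dd := by rw [hf0eq, hg0eq, ← hbez]
    exact mul_left_cancel₀ hddne this
  have hratH : ratH f0 g0 = ratH f1 g1 := by
    rw [← hf0eq, ← hg0eq]
    exact ratH_cancel hddne
  refine ⟨f1, g1, hg1ne, hcop, le_trans hg1deg hg0deg, ?_⟩
  rw [← hratH]
  refine le_trans hval0 ?_
  rw [gam_le_gam]
  omega


/-! ### the core approximation lemma -/

lemma ratH_eq (f g : Polynomial Fq) : ratH f g = polyToInfty Fq f / polyToInfty Fq g := rfl

lemma goodpair {q : ℕ} (hq1 : 1 < q) (M : ℤ) (N : ℕ) {β : RatFunc.CompletionAtInfty Fq} {f g : Polynomial Fq}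
    (hg : g ≠ 0) (hcop : IsCoprime f g) {j : ℤ}
    (hv : Valued.v (β - ratH f g) ≤ gam (-j))
    (hj1 : M + 2 * g.natDegree < j) (hj2 : (N:ℤ) < j) :
    IsApprox Fq q M β f g ∧
      absInfty Fq q (β - polyToInfty Fq f / polyToInfty Fq g) < (q:ℝ) ^ (-(N:ℤ)) := by
  have hq0 : (0:ℝ) < q := by positivity
  have hq1' : (1:ℝ) < q := by exact_mod_cast hq1
  have habs : absInfty Fq q (β - ratH f g) ≤ (q:ℝ) ^ (-j) := (zabs_le_iff hq1).mpr hv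
  have hlt1 : absInfty Fq q (β - ratH f g) < (q:ℝ) ^ (-(N:ℤ)) :=
    lt_of_le_of_lt habs ((zpow_lt_zpow_iff_right₀ hq1').mpr (by omega))
  refine ⟨⟨hg, hcop, ?_⟩, by rw [← ratH_eq]; exact hlt1⟩
  have hgabs : absInfty Fq q (polyToInfty Fq g) = (q:ℝ) ^ (g.natDegree : ℤ) := by
    rw [absInfty, v_polyToInfty hg, zabs_gam]
  rw [hgabs, ← ratH_eq]
  have hrhs : (q:ℝ) ^ (-M) / ((q:ℝ) ^ (g.natDegree:ℤ)) ^ 2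
      = (q:ℝ) ^ (-M - 2 * g.natDegree) := by
    have h2 : ((q:ℝ) ^ (g.natDegree:ℤ)) ^ (2:ℕ) = (q:ℝ) ^ (2 * (g.natDegree:ℤ)) := by
      rw [sq, ← zpow_add₀ (ne_of_gt hq0)]
      congr 1
      ring
    rw [h2, ← zpow_sub₀ (ne_of_gt hq0)]
  rw [hrhs]
  exact lt_of_le_of_lt habs ((zpow_lt_zpow_iff_right₀ hq1').mpr (by omega))

lemma core {q : ℕ} (hq : Fintype.card Fq = q) (M : ℤ) (N : ℕ) (α : RatFunc.CompletionAtInfty Fq) (k : ℕ)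
    (hk : 2*N + 3*M.natAbs + 5 ≤ k) :
    ∃ x : RatFunc.CompletionAtInfty Fq, Valued.v (x - α) ≤ gam (-(k:ℤ)) ∧
      ∀ β : RatFunc.CompletionAtInfty Fq, Valued.v (β - x) ≤ gam (-(k:ℤ) - (2*(M.natAbs:ℤ)+1)) →
        ∃ f g : Polynomial Fq, IsApprox Fq q M β f g ∧
          absInfty Fq q (β - polyToInfty Fq f / polyToInfty Fq g) < (q:ℝ) ^ (-(N:ℤ)) := by
  classical
  have hq1 : 1 < q := hq ▸ Fintype.one_lt_card
  have hMabs : M ≤ (M.natAbs : ℤ) := Int.le_natAbs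
  -- the set of denominator degrees realizable at scale k
  set SS : Set ℕ := {n | ∃ f g : Polynomial Fq, g ≠ 0 ∧ IsCoprime f g ∧ g.natDegree = n ∧
    Valued.v (α - ratH f g) ≤ gam (-(k:ℤ))} with hSS
  have hSSne : SS.Nonempty := by
    obtain ⟨f, g, hg, hcop, hdeg, hval⟩ := dirichlet hq α (k-1)
    refine ⟨g.natDegree, f, g, hg, hcop, rfl, le_trans hval ?_⟩
    rw [gam_le_gam]
    have hk1 : ((k-1:ℕ):ℤ) = (k:ℤ) - 1 := by omega
    rw [hk1]
    have : (0:ℤ) ≤ g.natDegree := Int.natCast_nonneg _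
    omega
  set d : ℕ := sInf SS with hd
  obtain ⟨f0, g0, hg0, hcop0, hdeg0, hval0⟩ : d ∈ SS := Nat.sInf_mem hSSne
  by_cases hcase : 2*(d:ℤ) ≤ (k:ℤ) + (2*(M.natAbs:ℤ)+1) - M - 1
  · -- subcase 1 : use f0/g0 and the sub-ball around it
    refine ⟨ratH f0 g0, by rwa [Valuation.map_sub_swap], ?_⟩
    intro β hβ
    refine ⟨f0, g0, goodpair hq1 M N hg0 hcop0 (j := (k:ℤ) + (2*(M.natAbs:ℤ)+1))
      (le_trans hβ (le_of_eq (congrArg gam (by ring)))) ?_ ?_⟩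
    · rw [hdeg0]; omega
    · omega
  · -- subcase 2 : a low-degree rational kills the whole ball
    push_neg at hcase
    have hd1 : 1 ≤ d := by omega
    obtain ⟨w, h, hh, hcoph, hdegh, hvalh⟩ := dirichlet hq α (d-1)
    set e : ℕ := h.natDegree with he
    have hed : e ≤ d - 1 := hdegh
    have hvwh : Valued.v (α - ratH w h) ≤ gam (-(d:ℤ) - e) := by
      refine le_trans hvalh (le_of_eq (congrArg gam ?_))
      have : ((d-1:ℕ):ℤ) = (d:ℤ) - 1 := by omega
      rw [this]
      ring
    have hnotin : ¬ Valued.v (α - ratH w h) ≤ gam (-(k:ℤ)) := by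
      intro hcon
      have : e ∈ SS := ⟨w, h, hh, hcoph, rfl, hcon⟩
      have := Nat.sInf_le this
      omega
    have hgt : gam (-(k:ℤ)) < Valued.v (α - ratH w h) := lt_of_not_ge hnotin
    have hne_el : ratH w h ≠ ratH f0 g0 := by
      intro hcon
      rw [hcon] at hnotin
      exact hnotin hval0
    have hsp : gam (-(h.natDegree:ℤ) - g0.natDegree) ≤ Valued.v (ratH w h - ratH f0 g0) :=
      spacing hh hg0 hne_el
    have hub : Valued.v (ratH w h - ratH f0 g0) ≤ Valued.v (α - ratH w h) := by
      have hsplit : ratH w h - ratH f0 g0 = -(α - ratH w h) + (α - ratH f0 g0) := by ring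
      rw [hsplit]
      refine le_trans (Valuation.map_add _ _ _) (max_le ?_ ?_)
      · rw [Valuation.map_neg]
      · exact le_trans hval0 (le_of_lt hgt)
    have hval_eq : Valued.v (α - ratH w h) = gam (-(d:ℤ) - e) := by
      refine le_antisymm hvwh (le_trans (le_of_eq (congrArg gam ?_)) (le_trans hsp hub))
      rw [hdeg0]
      ring
    have hdek : (d:ℤ) + e < k := by
      have := hgt
      rw [hval_eq, gam_lt_gam] at this
      omega
    have he2 : (e:ℤ) ≤ (d:ℤ) - M - 1 := by omega
    refine ⟨α, by rw [sub_self, map_zero]; exact zero_le', ?_⟩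
    intro β hβ
    have hβwh : Valued.v (β - ratH w h) ≤ gam (-(d:ℤ) - e) := by
      have hsplit : β - ratH w h = (β - α) + (α - ratH w h) := by ring
      rw [hsplit]
      refine le_trans (Valuation.map_add _ _ _) (max_le ?_ (le_of_eq hval_eq))
      refine le_trans hβ ?_
      rw [gam_le_gam]
      omega
    refine ⟨w, h, goodpair hq1 M N hh hcoph (j := (d:ℤ) + e)
      (le_trans hβwh (le_of_eq (congrArg gam (by ring)))) ?_ ?_⟩
    · omega
    · omega


/-! ### balls and measures -/

def bal (n : ℕ) (x : RatFunc.CompletionAtInfty Fq) : Set (RatFunc.CompletionAtInfty Fq) := {z | Valued.v (z - x) ≤ gam (-(n:ℤ))}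

lemma mem_bal_self (n : ℕ) (x : RatFunc.CompletionAtInfty Fq) : x ∈ bal n x := by
  simp only [bal, Set.mem_setOf_eq, sub_self, map_zero]
  exact zero_le'

lemma isOpen_bal (n : ℕ) (x : RatFunc.CompletionAtInfty Fq) : IsOpen (bal n x) := by
  rw [isOpen_iff_mem_nhds]
  intro z hz
  refine Filter.mem_of_superset (nhds_gam z (-(n:ℤ))) ?_
  intro y hy
  simp only [Set.mem_setOf_eq] at hy
  exact triangle (le_of_lt hy) hz

lemma measurableSet_bal (n : ℕ) (x : RatFunc.CompletionAtInfty Fq) : MeasurableSet (bal n x) :=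
  (isOpen_bal n x).measurableSet

lemma measure_bal_eq {μ : MeasureTheory.Measure (RatFunc.CompletionAtInfty Fq)}
    (hinv : ∀ x : RatFunc.CompletionAtInfty Fq, μ.map (fun y => y + x) = μ) (n : ℕ) (x : RatFunc.CompletionAtInfty Fq) :
    μ (bal n x) = μ (bal n (0 : RatFunc.CompletionAtInfty Fq)) := by
  conv_lhs => rw [← hinv x]
  rw [MeasureTheory.Measure.map_apply (by exact (continuous_add_right x).measurable)
    (measurableSet_bal n x)]
  congr 1
  ext z
  simp only [bal, Set.mem_preimage, Set.mem_setOf_eq, add_sub_cancel_right, sub_zero]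

lemma bal_sub_subset (n j : ℕ) (x : RatFunc.CompletionAtInfty Fq) (c : Fin j → Fq) :
    bal (n+j) (x + dSum n j c) ⊆ bal n x := by
  intro z hz
  simp only [bal, Set.mem_setOf_eq] at hz ⊢
  have h1 : Valued.v (z - (x + dSum n j c)) ≤ gam (-(n:ℤ)) := by
    refine le_trans hz ?_
    rw [gam_le_gam]
    push_cast
    omega
  have h2 : Valued.v ((x + dSum n j c) - x) ≤ gam (-(n:ℤ)) := by
    rw [show (x + dSum n j c) - x = dSum n j c by ring]
    exact v_dSum_le n j c
  exact triangle h1 h2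

lemma bal_cover {n j : ℕ} {x z : RatFunc.CompletionAtInfty Fq} (hz : z ∈ bal n x) :
    ∃ c : Fin j → Fq, z ∈ bal (n+j) (x + dSum n j c) := by
  obtain ⟨c, hc⟩ := dSum_cover j n (z - x) hz
  refine ⟨c, ?_⟩
  simp only [bal, Set.mem_setOf_eq]
  rw [show z - (x + dSum n j c) = (z - x) - dSum n j c by ring]
  refine le_trans hc (le_of_eq (congrArg gam ?_))
  push_cast
  ring

lemma bal_disjoint {n j : ℕ} {x : RatFunc.CompletionAtInfty Fq} {c c' : Fin j → Fq} (hcc : c ≠ c') :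
    bal (n+j) (x + dSum n j c) ∩ bal (n+j) (x + dSum n j c') = ∅ := by
  rw [Set.eq_empty_iff_forall_notMem]
  rintro z ⟨h1, h2⟩
  simp only [bal, Set.mem_setOf_eq] at h1 h2
  have hd : Valued.v (dSum n j c' - dSum n j c) ≤ gam (-((n+j:ℕ):ℤ)) := by
    rw [show dSum n j c' - dSum n j c
      = (z - (x + dSum n j c)) - (z - (x + dSum n j c')) by ring]
    exact Valuation.map_sub_le _ h1 h2
  rw [dSum_sub] at hd
  have hne : c' - c ≠ 0 := sub_ne_zero.mpr (Ne.symm hcc)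
  have := v_dSum_ne_zero j n (c' - c) hne
  have hcast : gam (-(n:ℤ) - j) = gam (-((n+j:ℕ):ℤ)) := congrArg gam (by push_cast; ring)
  rw [hcast] at this
  exact absurd hd (not_le_of_gt this)

lemma measure_scale {q : ℕ} (hq : Fintype.card Fq = q)
    {μ : MeasureTheory.Measure (RatFunc.CompletionAtInfty Fq)}
    (hinv : ∀ x : RatFunc.CompletionAtInfty Fq, μ.map (fun y => y + x) = μ) (n j : ℕ) (x : RatFunc.CompletionAtInfty Fq) :
    μ (bal n x) = (q:ℝ≥0∞)^j * μ (bal (n+j) (0 : RatFunc.CompletionAtInfty Fq)) := by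
  have huni : bal n x = ⋃ c : Fin j → Fq, bal (n+j) (x + dSum n j c) := by
    apply Set.Subset.antisymm
    · intro z hz
      obtain ⟨c, hc⟩ := bal_cover hz
      exact Set.mem_iUnion.mpr ⟨c, hc⟩
    · exact Set.iUnion_subset (fun c => bal_sub_subset n j x c)
  rw [huni, MeasureTheory.measure_iUnion ?hdisj (fun c => measurableSet_bal _ _)]
  case hdisj =>
    intro c c' hcc
    rw [Function.onFun, Set.disjoint_iff_inter_eq_empty]
    exact bal_disjoint hcc
  rw [tsum_fintype]
  rw [Finset.sum_congr rfl (fun c _ => measure_bal_eq hinv (n+j) (x + dSum n j c))]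
  rw [Finset.sum_const, nsmul_eq_mul]
  congr 1
  rw [Finset.card_univ, Fintype.card_fun, hq, Fintype.card_fin]
  push_cast
  ring

/-! ### the exceptional sets -/

def ENset (q : ℕ) (M : ℤ) (N : ℕ) : Set (RatFunc.CompletionAtInfty Fq) :=
  {α | ∀ f g : Polynomial Fq, IsApprox Fq q M α f g →
    ¬(absInfty Fq q (α - polyToInfty Fq f / polyToInfty Fq g) < (q:ℝ) ^ (-(N:ℤ)))}

lemma shrink {q : ℕ} (hq : Fintype.card Fq = q) (M : ℤ) (N : ℕ)
    {μ : MeasureTheory.Measure (RatFunc.CompletionAtInfty Fq)}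
    (hinv : ∀ x : RatFunc.CompletionAtInfty Fq, μ.map (fun y => y + x) = μ) :
    ∀ (j k : ℕ) (x : RatFunc.CompletionAtInfty Fq), 2*N + 3*M.natAbs + 5 ≤ k →
      μ (ENset q M N ∩ bal k x) ≤
        ((q:ℝ≥0∞)^(2*M.natAbs+1) - 1)^j * μ (bal (k + (2*M.natAbs+1)*j) (0 : RatFunc.CompletionAtInfty Fq)) := by
  classical
  have hq1 : 1 < q := hq ▸ Fintype.one_lt_card
  intro j
  induction j with
  | zero =>
    intro k x hk
    simp only [pow_zero, one_mul, Nat.mul_zero, Nat.add_zero]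
    exact le_trans (MeasureTheory.measure_mono Set.inter_subset_right)
      (le_of_eq (measure_bal_eq hinv k x))
  | succ j ih =>
    intro k x hk
    set sN : ℕ := 2*M.natAbs+1 with hsN
    obtain ⟨xc, hxc, hkill⟩ := core hq M N x k hk
    obtain ⟨c₀, hc₀⟩ := bal_cover (n := k) (j := sN) (x := x) (z := xc)
      (by simpa only [bal, Set.mem_setOf_eq] using hxc)
    have hkillball : ∀ β ∈ bal (k+sN) (x + dSum k sN c₀), β ∉ ENset q M N := by
      intro β hβ hEN
      have hβxc : Valued.v (β - xc) ≤ gam (-(k:ℤ) - (2*(M.natAbs:ℤ)+1)) := by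
        have h1 : Valued.v (β - (x + dSum k sN c₀)) ≤ gam (-((k+sN:ℕ):ℤ)) := hβ
        have h2 : Valued.v ((x + dSum k sN c₀) - xc) ≤ gam (-((k+sN:ℕ):ℤ)) := by
          rw [Valuation.map_sub_swap]
          exact hc₀
        refine le_trans (triangle h1 h2) (le_of_eq (congrArg gam ?_))
        rw [hsN]
        push_cast
        ring
      obtain ⟨f, g, happ, habs⟩ := hkill β hβxc
      exact hEN f g happ habs
    have hincl : ENset q M N ∩ bal k x ⊆
        ⋃ c ∈ Finset.univ.erase c₀, (ENset q M N ∩ bal (k+sN) (x + dSum k sN c)) := by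
      rintro z ⟨hzE, hzB⟩
      obtain ⟨c, hc⟩ := bal_cover (j := sN) hzB
      have hcne : c ≠ c₀ := by
        rintro rfl
        exact hkillball z hc hzE
      exact Set.mem_biUnion (Finset.mem_erase.mpr ⟨hcne, Finset.mem_univ c⟩) ⟨hzE, hc⟩
    refine le_trans (MeasureTheory.measure_mono hincl) ?_
    refine le_trans (MeasureTheory.measure_biUnion_finset_le _ _) ?_
    have hbound : ∀ c ∈ Finset.univ.erase c₀,
        μ (ENset q M N ∩ bal (k+sN) (x + dSum k sN c)) ≤
          ((q:ℝ≥0∞)^sN - 1)^j * μ (bal (k + sN + sN*j) (0 : RatFunc.CompletionAtInfty Fq)) := by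
      intro c _
      exact ih (k+sN) (x + dSum k sN c) (by omega)
    refine le_trans (Finset.sum_le_sum hbound) ?_
    rw [Finset.sum_const, nsmul_eq_mul]
    have hcard : ((Finset.univ.erase c₀).card : ℝ≥0∞) = (q:ℝ≥0∞)^sN - 1 := by
      rw [Finset.card_erase_of_mem (Finset.mem_univ c₀), Finset.card_univ, Fintype.card_fun,
        hq, Fintype.card_fin]
      have hqpow : 1 ≤ q ^ sN := Nat.one_le_pow _ _ (by omega)
      push_cast [Nat.cast_sub hqpow]
      ring
    rw [hcard]
    have harith : k + sN + sN * j = k + sN * (j+1) := by ring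
    rw [harith]
    rw [pow_succ]
    ring_nf
    exact le_of_eq rfl


lemma enn_helper (u X B c : ℝ≥0∞) (hu : u ≠ 0) (hut : u ≠ ⊤) :
    u * (X * ((u⁻¹ * B) * c)) = X * (B * c) := by
  rw [show u * (X * ((u⁻¹ * B) * c)) = (u * u⁻¹) * (X * (B * c)) by ring,
    ENNReal.mul_inv_cancel hu hut, one_mul]

lemma bal_mono {m n : ℕ} (h : m ≤ n) (x : RatFunc.CompletionAtInfty Fq) : bal n x ⊆ bal m x := by
  intro z hz
  simp only [bal, Set.mem_setOf_eq] at hz ⊢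
  exact le_trans hz (gam_le_gam.mpr (by omega))

lemma Oinfty_eq_bal {q : ℕ} (hq1 : 1 < q) :
    Oinfty Fq q = bal 0 (0 : RatFunc.CompletionAtInfty Fq) := by
  ext α
  simp only [Oinfty, bal, Set.mem_setOf_eq, sub_zero, Nat.cast_zero, neg_zero]
  rw [show (1:ℝ) = (q:ℝ)^(0:ℤ) by norm_num]
  exact zabs_le_iff hq1

lemma ENset_null {q : ℕ} (hq : Fintype.card Fq = q) (M : ℤ) (N : ℕ)
    {μ : MeasureTheory.Measure (RatFunc.CompletionAtInfty Fq)} (hμ : IsHaar Fq q μ) :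
    μ (ENset q M N ∩ Oinfty Fq q) = 0 := by
  classical
  have hq1 : 1 < q := hq ▸ Fintype.one_lt_card
  obtain ⟨hinv, hpos, hfin⟩ := hμ
  set sN : ℕ := 2*M.natAbs+1 with hsN
  set k0 : ℕ := 2*N + 3*M.natAbs + 5 with hk0
  have hO : Oinfty Fq q = bal 0 (0 : RatFunc.CompletionAtInfty Fq) := Oinfty_eq_bal hq1
  rw [hO]
  rw [hO] at hfin
  set a : ℝ≥0∞ := μ (ENset q M N ∩ bal 0 (0 : RatFunc.CompletionAtInfty Fq)) with ha
  set c : ℝ≥0∞ := μ (bal 0 (0 : RatFunc.CompletionAtInfty Fq)) with hc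
  have hcfin : c ≠ ⊤ := ne_of_lt hfin
  have hqE0 : (q:ℝ≥0∞) ≠ 0 := by
    simp only [Ne, Nat.cast_eq_zero]
    omega
  have hqEtop : (q:ℝ≥0∞) ≠ ⊤ := ENNReal.natCast_ne_top q
  -- ball measures in terms of c
  have hbalm : ∀ m : ℕ, μ (bal m (0 : RatFunc.CompletionAtInfty Fq)) = ((q:ℝ≥0∞)^m)⁻¹ * c := by
    intro m
    have hscale := measure_scale hq hinv 0 m (0 : RatFunc.CompletionAtInfty Fq)
    have hpne : ((q:ℝ≥0∞)^m) ≠ 0 := pow_ne_zero _ hqE0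
    have hptop : ((q:ℝ≥0∞)^m) ≠ ⊤ := ENNReal.pow_ne_top hqEtop
    rw [hc, hscale, Nat.zero_add m, ← mul_assoc,
      ENNReal.inv_mul_cancel hpne hptop, one_mul]
  -- main bound
  have hbound : ∀ j : ℕ, a ≤ (((q:ℝ≥0∞)^sN - 1) * ((q:ℝ≥0∞)^sN)⁻¹)^j * c := by
    intro j
    have hcover : ENset q M N ∩ bal 0 (0 : RatFunc.CompletionAtInfty Fq) ⊆
        ⋃ cc : Fin k0 → Fq, (ENset q M N ∩ bal (0+k0) ((0:RatFunc.CompletionAtInfty Fq) + dSum 0 k0 cc)) := by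
      rintro z ⟨hzE, hzB⟩
      obtain ⟨cc, hcc⟩ := bal_cover (j := k0) hzB
      exact Set.mem_iUnion.mpr ⟨cc, hzE, hcc⟩
    have h1 : a ≤ ∑' cc : Fin k0 → Fq,
        μ (ENset q M N ∩ bal (0+k0) ((0:RatFunc.CompletionAtInfty Fq) + dSum 0 k0 cc)) :=
      le_trans (MeasureTheory.measure_mono hcover) (MeasureTheory.measure_iUnion_le _)
    rw [tsum_fintype] at h1
    have h2 : ∀ cc : Fin k0 → Fq,
        μ (ENset q M N ∩ bal (0+k0) ((0:RatFunc.CompletionAtInfty Fq) + dSum 0 k0 cc)) ≤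
        ((q:ℝ≥0∞)^sN - 1)^j * μ (bal (k0 + sN*j) (0:RatFunc.CompletionAtInfty Fq)) := by
      intro cc
      have := shrink hq M N hinv j (0+k0) ((0:RatFunc.CompletionAtInfty Fq) + dSum 0 k0 cc)
        (by rw [hk0]; omega)
      refine le_trans this (le_of_eq ?_)
      rw [Nat.zero_add]
    have h3 : a ≤ (q:ℝ≥0∞)^k0 * (((q:ℝ≥0∞)^sN - 1)^j * μ (bal (k0 + sN*j) (0:RatFunc.CompletionAtInfty Fq))) := by
      refine le_trans h1 ?_
      refine le_trans (Finset.sum_le_sum (fun cc _ => h2 cc)) ?_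
      rw [Finset.sum_const, nsmul_eq_mul, Finset.card_univ, Fintype.card_fun, hq,
        Fintype.card_fin]
      rw [Nat.cast_pow]
    rw [hbalm (k0 + sN*j)] at h3
    have hsplit : (((q:ℝ≥0∞)^(k0 + sN*j))⁻¹ : ℝ≥0∞)
        = ((q:ℝ≥0∞)^k0)⁻¹ * (((q:ℝ≥0∞)^sN)⁻¹)^j := by
      rw [pow_add (q:ℝ≥0∞) k0 (sN*j), pow_mul (q:ℝ≥0∞) sN j,
        ENNReal.mul_inv (Or.inl (pow_ne_zero _ hqE0)) (Or.inl (ENNReal.pow_ne_top hqEtop)),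
        ← ENNReal.inv_pow]
    rw [hsplit] at h3
    refine le_trans h3 (le_of_eq ?_)
    rw [enn_helper _ _ _ _ (pow_ne_zero _ hqE0) (ENNReal.pow_ne_top hqEtop), mul_pow]
    ring
  -- limit
  set r : ℝ≥0∞ := ((q:ℝ≥0∞)^sN - 1) * ((q:ℝ≥0∞)^sN)⁻¹ with hr
  have hrlt : r < 1 := by
    have h1 : (q:ℝ≥0∞)^sN - 1 < (q:ℝ≥0∞)^sN :=
      ENNReal.sub_lt_self (ENNReal.pow_ne_top hqEtop) (pow_ne_zero _ hqE0) one_ne_zero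
    rw [hr, ← div_eq_mul_inv,
      ENNReal.div_lt_iff (Or.inl (pow_ne_zero _ hqE0)) (Or.inl (ENNReal.pow_ne_top hqEtop)),
      one_mul]
    exact h1
  have htend : Filter.Tendsto (fun j : ℕ => r^j * c) Filter.atTop (nhds 0) := by
    have := ENNReal.Tendsto.mul_const
      (ENNReal.tendsto_pow_atTop_nhds_zero_of_lt_one hrlt) (Or.inr hcfin)
    simpa using this
  have : a ≤ 0 := ge_of_tendsto' htend hbound
  exact le_antisymm this zero_le

lemma not_approx_subset {q : ℕ} (hq1 : 1 < q) (M : ℤ) :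
    Oinfty Fq q \ {α | IsApproximable Fq q M α} ⊆
      ⋃ N : ℕ, (ENset q M N ∩ Oinfty Fq q) := by
  intro α hα
  obtain ⟨hO, hnap⟩ := hα
  by_contra hcon
  simp only [Set.mem_iUnion, Set.mem_inter_iff, not_exists, not_and] at hcon
  have hfg : ∀ N : ℕ, ∃ f g : Polynomial Fq, IsApprox Fq q M α f g ∧
      absInfty Fq q (α - polyToInfty Fq f / polyToInfty Fq g) < (q:ℝ)^(-(N:ℤ)) := by
    intro N
    have hne : α ∉ ENset q M N := fun hE => (hcon N) hE hO
    simp only [ENset, Set.mem_setOf_eq, not_forall] at hne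
    obtain ⟨f, g, hfg1, hfg2⟩ := hne
    exact ⟨f, g, hfg1, not_not.mp hfg2⟩
  choose F G hFG using hfg
  apply hnap
  refine ⟨F, G, fun n => (hFG n).1, ?_⟩
  rw [Filter.tendsto_def]
  intro S hS
  rw [Valued.mem_nhds] at hS
  obtain ⟨γ, hγ⟩ := hS
  obtain ⟨u, hu⟩ := WithZero.ne_zero_iff_exists.mp
    (show MonoidWithZeroHom.ValueGroup₀.embedding γ.1 ≠ 0 from (_root_.map_ne_zero _).mpr γ.ne_zero)
  set m : ℤ := Multiplicative.toAdd u with hm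
  have hum : (MonoidWithZeroHom.ValueGroup₀.embedding γ.1 : ℤᵐ⁰) = gam m := by rw [hm, gam]; simp [← hu]
  refine Filter.mem_atTop_sets.mpr ⟨(-m).toNat + 1, fun n hn => ?_⟩
  apply hγ
  simp only [Set.mem_setOf_eq]
  rw [Valuation.restrict_lt_iff_lt_embedding]
  have h2 : Valued.v (α - polyToInfty Fq (F n) / polyToInfty Fq (G n)) < gam (-(n:ℤ)) :=
    (zabs_lt_iff hq1).mp (hFG n).2
  rw [Valuation.map_sub_swap] at h2
  rw [hum]
  refine lt_of_lt_of_le h2 ?_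
  rw [gam_le_gam]
  have : ((-m).toNat : ℤ) ≥ -m := Int.self_le_toNat _
  omega

end FMA

theorem full_measure_of_M_approximable (q : ℕ) (hq : Fintype.card Fq = q) (M : ℤ)
    (μ : Measure (RatFunc.CompletionAtInfty Fq)) (hμ : IsHaar Fq q μ) :
    μ (Oinfty Fq q \ {α | IsApproximable Fq q M α}) = 0 := by
  have hq1 : 1 < q := hq ▸ Fintype.one_lt_card
  refine MeasureTheory.measure_mono_null (FMA.not_approx_subset hq1 M) ?_
  exact MeasureTheory.measure_iUnion_null (fun N => FMA.ENset_null hq M N hμ)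
end

section
/- Let L be a field and v : L → Γ₀ a valuation with values in a linearly ordered commutative group with zero Γ₀. Let a, b, c, d, u, z ∈ L with ad − bc ≠ 0 and cu + d ≠ 0, and suppose v(c·(z − u)) < v(cu + d). Then cz + d ≠ 0 and v( (az+b)/(cz+d) − (au+b)/(cu+d) ) = v(ad − bc) · v(z − u) · (v(cu + d))⁻². In additive notation: for the Möbius transformation ρ(z) = (az+b)/(cz+d) one has ν(ρ(z) − ρ(u)) = ν(ρ′(u)) + ν(z − u), where ρ′(u) = (ad − bc)/(cu + d)². (Lemma 6.2 of the paper, stating that a Möbius transformation changes the valuation of a ball it maps to a ball by the valuation of its derivative at the center.) -/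
/-- Lemma 6.2: if `v(c(z-u)) < v(cu+d)` and `ad - bc ≠ 0`, `cu + d ≠ 0`, then
`cz + d ≠ 0` and the Möbius transformation `ρ(z) = (az+b)/(cz+d)` satisfies
`v(ρ z - ρ u) = v(ad - bc) · v(z - u) · v(cu + d)⁻²`, i.e. additively
`ν(ρ z - ρ u) = ν(ρ'(u)) + ν(z - u)`. -/
theorem valuation_moebius_sub (L : Type*) [Field L]
    (Γ₀ : Type*) [LinearOrderedCommGroupWithZero Γ₀] (v : Valuation L Γ₀)
    (a b c d u z : L) (hdet : a * d - b * c ≠ 0) (hden : c * u + d ≠ 0)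
    (hball : v (c * (z - u)) < v (c * u + d)) :
    c * z + d ≠ 0 ∧
      v ((a * z + b) / (c * z + d) - (a * u + b) / (c * u + d)) =
        v (a * d - b * c) * v (z - u) * (v (c * u + d))⁻¹ ^ 2 := by
  have heq : c * z + d = c * (z - u) + (c * u + d) := by ring
  have h1 : v (c * z + d) = v (c * u + d) := by
    rw [heq]; exact v.map_add_eq_of_lt_right hball
  have hzd : c * z + d ≠ 0 := by
    intro h
    rw [h, v.map_zero] at h1
    exact hden ((v.zero_iff).mp h1.symm)
  refine ⟨hzd, ?_⟩
  have key : (a * z + b) / (c * z + d) - (a * u + b) / (c * u + d) =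
      (a * d - b * c) * (z - u) / ((c * z + d) * (c * u + d)) := by
    rw [div_sub_div _ _ hzd hden]; congr 1
    ring
  rw [key, map_div₀, map_mul, map_mul, h1, ← sq, inv_pow]
  exact div_eq_mul_inv _ _
end

section
/- Let F be a finite field with q elements and L a field extension of F of degree 2. Call a nonzero vector w ∈ L² rational if w is an L-scalar multiple of some nonzero vector of F². Then: (i) for any nonzero vectors v, w ∈ L², there exists g ∈ GL₂(F) such that g·v is an L-scalar multiple of w if and only if v and w are either both rational or both not rational (i.e. the Möbius action of GL₂(F) on ℙ¹(L) has exactly two orbits); (ii) the set of L-lines of L² spanned by rational vectors has exactly q + 1 elements, and the set of remaining L-lines has exactly q² − q elements. (The orbit computation asserted in Example 8.3 of the paper: GL₂(F_q) acts on ℙ¹(F_{q²}) with two orbits, of sizes q + 1 and q² − q.) -/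
/-- A nonzero vector of `L²` is *rational* (over the subfield `F`) if it is an `L`-scalar
multiple of a nonzero vector with entries in `F`. -/
def IsRationalVec (F L : Type*) [Field F] [Field L] [Algebra F L] (w : Fin 2 → L) : Prop :=
  ∃ (c : L) (u : Fin 2 → F), u ≠ 0 ∧ w = c • fun i => algebraMap F L (u i)

section Aux

variable {F L : Type*} [Field F] [Field L] [Algebra F L]

lemma aux_vec_ne_zero (z : L) : ![z, 1] ≠ 0 := by
  intro h
  have := congrFun h 1
  simp at this

lemma aux_e0_ne_zero : (![1, 0] : Fin 2 → L) ≠ 0 := by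
  intro h
  have := congrFun h 0
  simp at this

lemma aux_eq_smul_of_snd_ne {v : Fin 2 → L} (h : v 1 ≠ 0) :
    v = v 1 • ![v 0 / v 1, 1] := by
  funext i
  fin_cases i <;> simp [smul_eq_mul] <;> field_simp

lemma aux_eq_smul_of_snd_zero {v : Fin 2 → L} (h : v 1 = 0) :
    v = v 0 • ![1, 0] := by
  funext i
  fin_cases i <;> simp [smul_eq_mul, h]

lemma aux_isRational_smul {c : L} (hc : c ≠ 0) (w : Fin 2 → L) :
    IsRationalVec F L (c • w) ↔ IsRationalVec F L w := by
  constructor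
  · rintro ⟨d, u, hu, he⟩
    exact ⟨c⁻¹ * d, u, hu, by rw [mul_smul, ← he, inv_smul_smul₀ hc]⟩
  · rintro ⟨d, u, hu, he⟩
    exact ⟨c * d, u, hu, by rw [mul_smul, ← he]⟩

lemma aux_isRational_of_snd_zero {v : Fin 2 → L} (h : v 1 = 0) :
    IsRationalVec F L v := by
  refine ⟨v 0, ![1, 0], ?_, ?_⟩
  · intro hh
    have := congrFun hh 0
    simp at this
  · funext i
    fin_cases i <;> simp [smul_eq_mul, h]

lemma aux_isRational_iff_of_snd_ne {v : Fin 2 → L} (h : v 1 ≠ 0) :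
    IsRationalVec F L v ↔ v 0 / v 1 ∈ Set.range (algebraMap F L) := by
  constructor
  · rintro ⟨c, u, hu, he⟩
    have h0 : v 0 = c * algebraMap F L (u 0) := by rw [he]; simp [smul_eq_mul]
    have h1 : v 1 = c * algebraMap F L (u 1) := by rw [he]; simp [smul_eq_mul]
    have hc : c ≠ 0 := by rintro rfl; simp at h1; exact h h1
    have hu1 : u 1 ≠ 0 := by
      rintro hu1; rw [hu1] at h1; simp at h1; exact h h1
    refine ⟨u 0 / u 1, ?_⟩
    rw [map_div₀, h0, h1, mul_div_mul_left _ _ hc]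
  · rintro ⟨a, ha⟩
    refine ⟨v 1, ![a, 1], ?_, ?_⟩
    · intro hh
      have := congrFun hh 1
      simp at this
    · funext i
      fin_cases i <;> simp [smul_eq_mul]
      rw [ha]; field_simp

lemma aux_invVec {K : Type*} [Field K] {g : Matrix (Fin 2) (Fin 2) K} (hg : g.det ≠ 0)
    (u : Fin 2 → K) : g⁻¹.mulVec (g.mulVec u) = u := by
  rw [Matrix.mulVec_mulVec, Matrix.nonsing_inv_mul _ (isUnit_iff_ne_zero.mpr hg),
    Matrix.one_mulVec]

lemma aux_mulVec_ne_zero {K : Type*} [Field K] {g : Matrix (Fin 2) (Fin 2) K} (hg : g.det ≠ 0)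
    {u : Fin 2 → K} (hu : u ≠ 0) : g.mulVec u ≠ 0 := by
  intro h
  apply hu
  rw [← aux_invVec hg u, h, Matrix.mulVec_zero]

lemma aux_exists_mulVec_e0 {K : Type*} [Field K] {u : Fin 2 → K} (hu : u ≠ 0) :
    ∃ g : Matrix (Fin 2) (Fin 2) K, g.det ≠ 0 ∧ g.mulVec ![1, 0] = u := by
  by_cases h0 : u 0 = 0
  · have h1 : u 1 ≠ 0 := by
      intro h1; apply hu; funext i; fin_cases i <;> simp [h0, h1]
    refine ⟨Matrix.of ![![0, 1], ![u 1, 0]], ?_, ?_⟩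
    · rw [Matrix.det_fin_two]; simp [h1]
    · funext i
      fin_cases i <;> simp [Matrix.mulVec, dotProduct, Fin.sum_univ_two, h0]
  · refine ⟨Matrix.of ![![u 0, 0], ![u 1, 1]], ?_, ?_⟩
    · rw [Matrix.det_fin_two]; simp [h0]
    · funext i
      fin_cases i <;> simp [Matrix.mulVec, dotProduct, Fin.sum_univ_two]

lemma aux_exists_mulVec {K : Type*} [Field K] {u u' : Fin 2 → K} (hu : u ≠ 0) (hu' : u' ≠ 0) :
    ∃ g : Matrix (Fin 2) (Fin 2) K, g.det ≠ 0 ∧ g.mulVec u = u' := by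
  obtain ⟨g, hg, hge⟩ := aux_exists_mulVec_e0 hu
  obtain ⟨g', hg', hge'⟩ := aux_exists_mulVec_e0 hu'
  refine ⟨g' * g⁻¹, ?_, ?_⟩
  · rw [Matrix.det_mul, Matrix.det_nonsing_inv]
    exact mul_ne_zero hg' (by simp [Ring.inverse_eq_inv', hg])
  · rw [← Matrix.mulVec_mulVec, ← hge, aux_invVec hg, hge']

lemma aux_map_mulVec_smul (g : Matrix (Fin 2) (Fin 2) F) (c : L) (u : Fin 2 → F) :
    (g.map (algebraMap F L)).mulVec (c • fun i => algebraMap F L (u i)) =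
      c • fun i => algebraMap F L (g.mulVec u i) := by
  rw [Matrix.mulVec_smul]
  congr 1
  funext i
  rw [RingHom.map_mulVec (algebraMap F L) g u i]
  rfl

lemma aux_isRational_mulVec {g : Matrix (Fin 2) (Fin 2) F} (hg : g.det ≠ 0) {v : Fin 2 → L}
    (hv : IsRationalVec F L v) : IsRationalVec F L ((g.map (algebraMap F L)).mulVec v) := by
  obtain ⟨c, u, hu, rfl⟩ := hv
  exact ⟨c, g.mulVec u, aux_mulVec_ne_zero hg hu, aux_map_mulVec_smul g c u⟩

lemma aux_map_inv_cancel {g : Matrix (Fin 2) (Fin 2) F} (hg : g.det ≠ 0) (v : Fin 2 → L) :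
    (g⁻¹.map (algebraMap F L)).mulVec ((g.map (algebraMap F L)).mulVec v) = v := by
  rw [Matrix.mulVec_mulVec, ← Matrix.map_mul, Matrix.nonsing_inv_mul _ (isUnit_iff_ne_zero.mpr hg),
    Matrix.map_one _ (map_zero _) (map_one _), Matrix.one_mulVec]

lemma aux_isRational_mulVec_iff {g : Matrix (Fin 2) (Fin 2) F} (hg : g.det ≠ 0) (v : Fin 2 → L) :
    IsRationalVec F L ((g.map (algebraMap F L)).mulVec v) ↔ IsRationalVec F L v := by
  refine ⟨fun h => ?_, aux_isRational_mulVec hg⟩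
  have hg' : g⁻¹.det ≠ 0 := by
    rw [Matrix.det_nonsing_inv]
    simp [Ring.inverse_eq_inv', hg]
  have := aux_isRational_mulVec hg' h
  rwa [aux_map_inv_cancel hg] at this

lemma aux_repr (hdim : Module.finrank F L = 2) {z : L} (hz : z ∉ Set.range (algebraMap F L))
    (x : L) : ∃ a b : F, x = algebraMap F L a * z + algebraMap F L b := by
  have li : LinearIndependent F ![z, (1 : L)] := by
    rw [linearIndependent_fin2]
    refine ⟨by simp, fun a ha => ?_⟩
    simp only [Matrix.cons_val_one, Matrix.head_cons, Matrix.cons_val_zero] at ha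
    exact hz ⟨a, by rw [Algebra.algebraMap_eq_smul_one]; exact ha⟩
  have hsp : Submodule.span F (Set.range ![z, (1 : L)]) = ⊤ :=
    LinearIndependent.span_eq_top_of_card_eq_finrank li (by simp [hdim])
  have hx : x ∈ Submodule.span F ({z, (1 : L)} : Set L) := by
    have hr : Set.range ![z, (1 : L)] = {z, (1 : L)} := by
      ext y; simp [Fin.exists_fin_two]; tauto
    rw [← hr, hsp]; trivial
  obtain ⟨a, b, hab⟩ := Submodule.mem_span_pair.mp hx
  exact ⟨a, b, by rw [← hab]; simp [Algebra.smul_def]⟩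

lemma aux_irrational_trans (hdim : Module.finrank F L = 2) {z z' : L}
    (hz : z ∉ Set.range (algebraMap F L)) (hz' : z' ∉ Set.range (algebraMap F L)) :
    ∃ g : Matrix (Fin 2) (Fin 2) F, g.det ≠ 0 ∧
      (g.map (algebraMap F L)).mulVec ![z, 1] = ![z', 1] := by
  obtain ⟨a, b, hab⟩ := aux_repr hdim hz z'
  have ha : a ≠ 0 := by
    rintro rfl
    exact hz' ⟨b, by rw [hab]; simp⟩
  refine ⟨Matrix.of ![![a, b], ![0, 1]], by rw [Matrix.det_fin_two]; simp [ha], ?_⟩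
  funext i
  fin_cases i <;>
    simp [Matrix.mulVec, dotProduct, Fin.sum_univ_two, Matrix.map_apply]
  rw [hab]

lemma aux_ratline_inj : Function.Injective (fun z : L => Submodule.span L {![z, 1]}) := by
  intro z z' h
  have h' : Submodule.span L {![z, (1 : L)]} = Submodule.span L {![z', (1 : L)]} := h
  have hm : ![z, 1] ∈ Submodule.span L {![z', (1 : L)]} := by
    rw [← h']; exact Submodule.mem_span_singleton_self _
  obtain ⟨a, ha⟩ := Submodule.mem_span_singleton.mp hm
  have h1 := congrFun ha 1
  have h0 := congrFun ha 0
  simp [smul_eq_mul] at h1 h0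
  rw [h1, one_mul] at h0
  exact h0.symm

lemma aux_ratline_ne (z : L) :
    Submodule.span L {![z, 1]} ≠ Submodule.span L {![(1 : L), 0]} := by
  intro h
  have hm : ![(1 : L), 0] ∈ Submodule.span L {![z, (1 : L)]} := by
    rw [h]; exact Submodule.mem_span_singleton_self _
  obtain ⟨a, ha⟩ := Submodule.mem_span_singleton.mp hm
  have h1 := congrFun ha 1
  have h0 := congrFun ha 0
  simp [smul_eq_mul] at h1 h0
  rw [h1, zero_mul] at h0
  exact zero_ne_one h0

lemma aux_span_eq_of_snd_ne {w : Fin 2 → L} (h : w 1 ≠ 0) :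
    Submodule.span L {w} = Submodule.span L {![w 0 / w 1, 1]} := by
  conv_lhs => rw [aux_eq_smul_of_snd_ne h]
  exact Submodule.span_singleton_smul_eq (isUnit_iff_ne_zero.mpr h) _

lemma aux_span_eq_of_snd_zero {w : Fin 2 → L} (hw : w ≠ 0) (h : w 1 = 0) :
    Submodule.span L {w} = Submodule.span L {![(1 : L), 0]} := by
  have hw0 : w 0 ≠ 0 := by
    intro h0
    exact hw (funext fun i => by fin_cases i <;> simp [h0, h])
  conv_lhs => rw [aux_eq_smul_of_snd_zero h]
  exact Submodule.span_singleton_smul_eq (isUnit_iff_ne_zero.mpr hw0) _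

end Aux

/-- orbit computation of Example 8.3: let `F` be a finite field with `q`
elements and `L/F` of degree 2. Then (i) two nonzero vectors of `L²` are in the same
`GL₂(F)`-orbit on `ℙ¹(L)` iff they are both rational or both irrational; (ii) there are
exactly `q + 1` rational `L`-lines and `q² - q` remaining `L`-lines in `L²`. -/
theorem GL2_orbits_on_P1_of_quadratic_extension (F L : Type*) [Field F] [Fintype F]
    [Field L] [Algebra F L] (q : ℕ) (hq : Fintype.card F = q)
    (hdim : Module.finrank F L = 2) :
    (∀ v w : Fin 2 → L, v ≠ 0 → w ≠ 0 →
      ((∃ g : Matrix (Fin 2) (Fin 2) F, g.det ≠ 0 ∧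
          ∃ c : L, (g.map (algebraMap F L)).mulVec v = c • w) ↔
        (IsRationalVec F L v ↔ IsRationalVec F L w))) ∧
    Nat.card {S : Submodule L (Fin 2 → L) |
      ∃ w : Fin 2 → L, w ≠ 0 ∧ IsRationalVec F L w ∧ S = Submodule.span L {w}} = q + 1 ∧
    Nat.card {S : Submodule L (Fin 2 → L) |
      (∃ w : Fin 2 → L, w ≠ 0 ∧ S = Submodule.span L {w}) ∧
        ¬ ∃ w : Fin 2 → L, w ≠ 0 ∧ IsRationalVec F L w ∧ S = Submodule.span L {w}} =
      q ^ 2 - q := by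
  have hφ : Function.Injective (algebraMap F L) := (algebraMap F L).injective
  refine ⟨?_, ?_, ?_⟩
  · -- part (i)
    intro v w hv hw
    constructor
    · rintro ⟨g, hg, c, hgc⟩
      have hgdet : ((g.map (algebraMap F L)) : Matrix (Fin 2) (Fin 2) L).det ≠ 0 := by
        rw [show g.map (algebraMap F L) = (algebraMap F L).mapMatrix g from rfl,
          ← RingHom.map_det]
        simpa using hg
      have hc : c ≠ 0 := by
        rintro rfl
        rw [zero_smul] at hgc
        exact aux_mulVec_ne_zero hgdet hv hgc
      rw [← aux_isRational_mulVec_iff hg v, hgc, aux_isRational_smul hc]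
    · intro hiff
      by_cases hr : IsRationalVec F L v
      · obtain ⟨d, u', hu', hw'⟩ := hiff.mp hr
        obtain ⟨c, u, hu, hv'⟩ := hr
        have hc : c ≠ 0 := by
          rintro rfl; rw [zero_smul] at hv'; exact hv hv'
        have hd : d ≠ 0 := by
          rintro rfl; rw [zero_smul] at hw'; exact hw hw'
        obtain ⟨g, hg, hge⟩ := aux_exists_mulVec hu hu'
        refine ⟨g, hg, c * d⁻¹, ?_⟩
        rw [hv', aux_map_mulVec_smul, hge, hw', smul_smul]
        congr 1
        field_simp
      · have hrw : ¬ IsRationalVec F L w := fun h => hr (hiff.mpr h)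
        have hv1 : v 1 ≠ 0 := fun h => hr (aux_isRational_of_snd_zero h)
        have hw1 : w 1 ≠ 0 := fun h => hrw (aux_isRational_of_snd_zero h)
        have hzv : v 0 / v 1 ∉ Set.range (algebraMap F L) :=
          fun h => hr ((aux_isRational_iff_of_snd_ne hv1).mpr h)
        have hzw : w 0 / w 1 ∉ Set.range (algebraMap F L) :=
          fun h => hrw ((aux_isRational_iff_of_snd_ne hw1).mpr h)
        obtain ⟨g, hg, hge⟩ := aux_irrational_trans hdim hzv hzw
        refine ⟨g, hg, v 1 * (w 1)⁻¹, ?_⟩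
        conv_lhs => rw [aux_eq_smul_of_snd_ne hv1]
        rw [Matrix.mulVec_smul, hge]
        funext i
        fin_cases i <;> simp [smul_eq_mul] <;> field_simp <;> ring
  · -- rational lines
    have hRat : {S : Submodule L (Fin 2 → L) |
        ∃ w : Fin 2 → L, w ≠ 0 ∧ IsRationalVec F L w ∧ S = Submodule.span L {w}}
        = insert (Submodule.span L {![(1 : L), 0]})
            (Set.range fun a : F => Submodule.span L {![algebraMap F L a, 1]}) := by
      ext S
      simp only [Set.mem_setOf_eq, Set.mem_insert_iff, Set.mem_range]
      constructor
      · rintro ⟨w, hw, hrat, rfl⟩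
        by_cases h1 : w 1 = 0
        · exact Or.inl (aux_span_eq_of_snd_zero hw h1)
        · obtain ⟨a, ha⟩ := (aux_isRational_iff_of_snd_ne h1).mp hrat
          exact Or.inr ⟨a, by rw [aux_span_eq_of_snd_ne h1, ha]⟩
      · rintro (rfl | ⟨a, rfl⟩)
        · exact ⟨![1, 0], aux_e0_ne_zero, aux_isRational_of_snd_zero (by simp), rfl⟩
        · refine ⟨![algebraMap F L a, 1], aux_vec_ne_zero _, ?_, rfl⟩
          exact (aux_isRational_iff_of_snd_ne (by simp)).mpr ⟨a, by simp⟩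
    have hinj : Function.Injective fun a : F => Submodule.span L {![algebraMap F L a, 1]} :=
      fun a b h => hφ (aux_ratline_inj h)
    rw [Nat.card_coe_set_eq, hRat, Set.ncard_insert_of_notMem ?_ (Set.finite_range _),
      ← Nat.card_coe_set_eq, Nat.card_range_of_injective hinj, Nat.card_eq_fintype_card, hq]
    rintro ⟨a, ha⟩
    exact aux_ratline_ne _ ha
  · -- irrational lines
    haveI : Module.Finite F L := Module.finite_of_finrank_eq_succ hdim
    haveI : Finite L := Module.finite_of_finite F
    haveI : Fintype L := Fintype.ofFinite L
    have hcardL : Nat.card L = q ^ 2 := by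
      rw [Nat.card_eq_fintype_card, Module.card_eq_pow_finrank (K := F) (V := L), hq, hdim]
    have hIrr : {S : Submodule L (Fin 2 → L) |
        (∃ w : Fin 2 → L, w ≠ 0 ∧ S = Submodule.span L {w}) ∧
          ¬ ∃ w : Fin 2 → L, w ≠ 0 ∧ IsRationalVec F L w ∧ S = Submodule.span L {w}}
        = (fun z : L => Submodule.span L {![z, 1]}) '' (Set.range (algebraMap F L))ᶜ := by
      ext S
      simp only [Set.mem_setOf_eq, Set.mem_image, Set.mem_compl_iff]
      constructor
      · rintro ⟨⟨w, hw, rfl⟩, hnot⟩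
        have hrat : ¬ IsRationalVec F L w := fun h => hnot ⟨w, hw, h, rfl⟩
        have h1 : w 1 ≠ 0 := fun h => hrat (aux_isRational_of_snd_zero h)
        refine ⟨w 0 / w 1, ?_, (aux_span_eq_of_snd_ne h1).symm⟩
        exact fun h => hrat ((aux_isRational_iff_of_snd_ne h1).mpr h)
      · rintro ⟨z, hz, rfl⟩
        refine ⟨⟨![z, 1], aux_vec_ne_zero z, rfl⟩, ?_⟩
        rintro ⟨w, hw, hrat, hsp⟩
        have hm : w ∈ Submodule.span L {![z, (1 : L)]} := by
          rw [hsp]; exact Submodule.mem_span_singleton_self _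
        obtain ⟨a, ha⟩ := Submodule.mem_span_singleton.mp hm
        have ha1 : w 1 = a := by rw [← ha]; simp
        have ha0 : w 0 = a * z := by rw [← ha]; simp [smul_eq_mul]
        have haz : a ≠ 0 := by
          rintro rfl
          apply hw
          funext i; fin_cases i <;> simp [ha0, ha1]
        have h1 : w 1 ≠ 0 := by rw [ha1]; exact haz
        apply hz
        have := (aux_isRational_iff_of_snd_ne h1).mp hrat
        rwa [ha0, ha1, mul_div_cancel_left₀ _ haz] at this
    have hq2 : (Set.range (algebraMap F L)).ncard = q := by
      rw [← Nat.card_coe_set_eq, Nat.card_range_of_injective hφ,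
        Nat.card_eq_fintype_card, hq]
    have hcompl := Set.ncard_add_ncard_compl (Set.range (algebraMap F L))
    rw [Nat.card_coe_set_eq, hIrr, Set.ncard_image_of_injective _ aux_ratline_inj]
    omega
end
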